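/- Let α₁, α₀, α₋₁ ∈ ℝ^K and α̃₁, α̃₀, α̃₋₁ ∈ ℝ^K be two linearly independent triples of vectors. If α₁ α₋₁ᵀ = α̃₁ α̃₋₁ᵀ and α₁ α₀ᵀ + α₀ α₋₁ᵀ = α̃₁ α̃₀ᵀ + α̃₀ α̃₋₁ᵀ, then there exists ε ∈ {−1, 1} such that α̃ᵢ = ε αᵢ for each i ∈ {−1, 0, 1}. (This is the identification of the loading vectors in model (M) in the case ρ = 0, where C₁ = σ²(α₁α₀ᵀ + α₀α₋₁ᵀ) and C₂ = σ²α₁α₋₁ᵀ.) -/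

import Mathlib

open Matrix

lemma indep3 {K : ℕ} {a b c : Fin K → ℝ}
    (h : LinearIndependent ℝ ![a, b, c]) (p q r : ℝ)
    (hz : p • a + q • b + r • c = 0) : p = 0 ∧ q = 0 ∧ r = 0 := by
  have := Fintype.linearIndependent_iff.mp h ![p, q, r] (by
    simpa [Fin.sum_univ_three] using hz)
  exact ⟨this 0, this 1, this 2⟩

/-- identification of the loading vectors in the case `ρ = 0`: if two
linearly independent triples produce the same matrices `α₁ α₋₁ᵀ` and
`α₁ α₀ᵀ + α₀ α₋₁ᵀ`, they coincide up to a common sign. -/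
theorem stmt_6 {K : ℕ} (hK : 1 ≤ K)
    (α1 α0 αm1 β1 β0 βm1 : Fin K → ℝ)
    (hli : LinearIndependent ℝ ![α1, α0, αm1])
    (hli' : LinearIndependent ℝ ![β1, β0, βm1])
    (h2 : vecMulVec α1 αm1 = vecMulVec β1 βm1)
    (h1 : vecMulVec α1 α0 + vecMulVec α0 αm1 = vecMulVec β1 β0 + vecMulVec β0 βm1) :
    ∃ ε : ℝ, (ε = 1 ∨ ε = -1) ∧ β1 = ε • α1 ∧ β0 = ε • α0 ∧ βm1 = ε • αm1 := by
  -- entrywise versions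
  have e2 : ∀ i j, α1 i * αm1 j = β1 i * βm1 j := by
    intro i j
    have := congrFun (congrFun h2 i) j
    simpa [vecMulVec_apply] using this
  have e1 : ∀ i j, α1 i * α0 j + α0 i * αm1 j = β1 i * β0 j + β0 i * βm1 j := by
    intro i j
    have := congrFun (congrFun h1 i) j
    simpa [vecMulVec_apply, Matrix.add_apply] using this
  -- nonzero vectors
  have hα1ne : α1 ≠ 0 := by simpa using hli.ne_zero 0
  have hαm1ne : αm1 ≠ 0 := by simpa using hli.ne_zero 2
  obtain ⟨i0, hi0⟩ := Function.ne_iff.mp hα1ne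
  obtain ⟨x, hx⟩ := Function.ne_iff.mp hαm1ne
  simp only [Pi.zero_apply] at hi0 hx
  have key : α1 i0 * αm1 x ≠ 0 := mul_ne_zero hi0 hx
  have hβ : β1 i0 * βm1 x ≠ 0 := by rw [← e2]; exact key
  have hβ1 : β1 i0 ≠ 0 := fun h => hβ (by simp [h])
  have hβm1 : βm1 x ≠ 0 := fun h => hβ (by simp [h])
  set t : ℝ := αm1 x / βm1 x with ht
  have htne : t ≠ 0 := div_ne_zero hx hβm1
  have hb1 : ∀ i, β1 i = t * α1 i := by
    intro i
    have := e2 i x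
    field_simp [ht]
    rw [ht, div_mul_eq_mul_div, mul_comm (αm1 x), this, mul_div_assoc, div_self hβm1, mul_one]
  have hbm1 : ∀ j, βm1 j = t⁻¹ * αm1 j := by
    intro j
    have h := e2 i0 j
    rw [hb1 i0] at h
    have : αm1 j = t * βm1 j := by
      have := mul_left_cancel₀ hi0 (by linarith [h] : α1 i0 * αm1 j = α1 i0 * (t * βm1 j))
      exact this
    rw [this]
    field_simp
  -- main equation
  have main : ∀ i j, α1 i * (α0 j - t * β0 j) + (α0 i - t⁻¹ * β0 i) * αm1 j = 0 := by
    intro i j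
    have h := e1 i j
    rw [hb1 i, hbm1 j] at h
    ring_nf
    ring_nf at h
    linarith [h]
  set b : ℝ := -((α0 x - t * β0 x) / αm1 x) with hbdef
  have hcan : b * αm1 x = -(α0 x - t * β0 x) := by
    rw [hbdef]; field_simp
  have hw : ∀ i, α0 i - t⁻¹ * β0 i = b * α1 i := by
    intro i
    have h := main i x
    have hm : (α0 i - t⁻¹ * β0 i) * αm1 x = b * α1 i * αm1 x := by
      linear_combination h - α1 i * hcan
    exact mul_right_cancel₀ hx hm
  have hβ0 : ∀ i, β0 i = t * (α0 i - b * α1 i) := by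
    intro i
    have h := hw i
    have : t⁻¹ * β0 i = α0 i - b * α1 i := by linarith
    calc β0 i = t * (t⁻¹ * β0 i) := by field_simp
    _ = t * (α0 i - b * α1 i) := by rw [this]
  set a : ℝ := -((α0 i0 - t⁻¹ * β0 i0) / α1 i0) with hadef
  have hcan' : a * α1 i0 = -(α0 i0 - t⁻¹ * β0 i0) := by
    rw [hadef]; field_simp
  have hu : ∀ j, α0 j - t * β0 j = a * αm1 j := by
    intro j
    have h := main i0 j
    have hm : α1 i0 * (α0 j - t * β0 j) = α1 i0 * (a * αm1 j) := by
      linear_combination h - αm1 j * hcan'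
    exact mul_left_cancel₀ hi0 hm
  -- combine
  have comb : (t^2 * b) • α1 + (1 - t^2) • α0 + (-a) • αm1 = 0 := by
    funext j
    have h1' := hu j
    have h2' := hβ0 j
    simp only [Pi.add_apply, Pi.smul_apply, smul_eq_mul, Pi.zero_apply]
    rw [h2'] at h1'
    ring_nf at h1' ⊢
    linarith [h1']
  obtain ⟨c1, c2, c3⟩ := indep3 hli _ _ _ comb
  have ht2 : t^2 = 1 := by linarith
  have hbz : b = 0 := by
    have : t^2 ≠ 0 := pow_ne_zero 2 htne
    exact (mul_eq_zero.mp c1).resolve_left this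
  have hmul : t * t = 1 := by nlinarith [ht2]
  have htt : t = 1 ∨ t = -1 := mul_self_eq_one_iff.mp hmul
  have htinv : t⁻¹ = t := inv_eq_of_mul_eq_one_left hmul
  refine ⟨t, htt, ?_, ?_, ?_⟩
  · funext i; simp [hb1 i, mul_comm]
  · funext i; simp [hβ0 i, hbz]
  · funext j; simp [hbm1 j, htinv]
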